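/- Lemma 1 (optimality of hard partitions): suppose every entry of the channel matrix A is strictly positive. Then for every row-stochastic quantizer Q : Fin M → Fin K → ℝ there exists a deterministic quantizer Q' (i.e., for each m there is a unique k with Q' m k = 1 and Q' m k' = 0 for k' ≠ k) with J(Q') ≤ J(Q). Consequently, if the minimum of J over row-stochastic matrices is attained, it is attained at a deterministic quantizer. -/

import Mathlib

def simplex (N : ℕ) : Set (Fin N → ℝ) := {q | (∀ n, 0 ≤ q n) ∧ ∑ n, q n = 1}

/-- `f` is concave on the standard probability simplex. -/
def ConcaveOnSimplex {N : ℕ} (f : (Fin N → ℝ) → ℝ) : Prop :=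
  ∀ a ∈ simplex N, ∀ b ∈ simplex N, ∀ lam : ℝ, lam ∈ Set.Icc (0:ℝ) 1 →
    lam * f a + (1 - lam) * f b ≤ f (lam • a + (1 - lam) • b)

/-- The impurity functional `F(v) = (∑ n, v n) * f (v / ∑ n, v n)`. -/
noncomputable def impurity {N : ℕ} (f : (Fin N → ℝ) → ℝ) (v : Fin N → ℝ) : ℝ :=
  (∑ n, v n) * f (fun n => v n / ∑ m, v m)

/-- A joint distribution on `Fin N × Fin M`. -/
def IsJointDist {N M : ℕ} (p : Fin N → Fin M → ℝ) : Prop :=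
  (∀ n m, 0 ≤ p n m) ∧ ∑ n, ∑ m, p n m = 1

/-- A row-stochastic matrix. -/
def RowStochastic {M K : ℕ} (Q : Fin M → Fin K → ℝ) : Prop :=
  (∀ m k, 0 ≤ Q m k) ∧ ∀ m, ∑ k, Q m k = 1

/-- Marginal of the data `Y`: `p_{Y_m} = ∑ n, p n m`. -/
noncomputable def pY {N M : ℕ} (p : Fin N → Fin M → ℝ) (m : Fin M) : ℝ := ∑ n, p n m

/-- Joint distribution of the source and the quantizer output. -/
noncomputable def pXZ {N M K : ℕ} (p : Fin N → Fin M → ℝ) (Q : Fin M → Fin K → ℝ)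
    (n : Fin N) (k : Fin K) : ℝ := ∑ m, p n m * Q m k

/-- Marginal of the quantizer output. -/
noncomputable def pZ {N M K : ℕ} (p : Fin N → Fin M → ℝ) (Q : Fin M → Fin K → ℝ)
    (k : Fin K) : ℝ := ∑ n, pXZ p Q n k

/-- Joint distribution of the source and the channel output. -/
noncomputable def pXT {N M K H : ℕ} (p : Fin N → Fin M → ℝ) (Q : Fin M → Fin K → ℝ)
    (A : Fin K → Fin H → ℝ) (n : Fin N) (h : Fin H) : ℝ := ∑ k, pXZ p Q n k * A k h

/-- The objective `J(Q) = β ∑_h F(p_{XT}(·,h)) + ∑_k g_k(p_Z(k))`. -/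
noncomputable def J {N M K H : ℕ} (β : ℝ) (f : (Fin N → ℝ) → ℝ) (g : Fin K → ℝ → ℝ)
    (p : Fin N → Fin M → ℝ) (A : Fin K → Fin H → ℝ) (Q : Fin M → Fin K → ℝ) : ℝ :=
  β * ∑ h, impurity f (fun n => pXT p Q A n h) + ∑ k, g k (pZ p Q k)

/-- A deterministic (hard) quantizer. -/
def Deterministic {M K : ℕ} (Q : Fin M → Fin K → ℝ) : Prop :=
  ∀ m, ∃ k, Q m k = 1 ∧ ∀ k', k' ≠ k → Q m k' = 0

lemma impurity_smul {N : ℕ} (f : (Fin N → ℝ) → ℝ) {c : ℝ} (hc : 0 < c) (v : Fin N → ℝ) :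
    impurity f (c • v) = c * impurity f v := by
  unfold impurity
  have h1 : ∑ n, (c • v) n = c * ∑ n, v n := by
    simp [Finset.mul_sum]
  rw [h1]
  have h2 : (fun n => (c • v) n / (c * ∑ m, v m)) = (fun n => v n / ∑ m, v m) := by
    funext n
    simp only [Pi.smul_apply, smul_eq_mul]
    rw [mul_div_mul_left _ _ (ne_of_gt hc)]
  rw [h2]; ring

lemma impurity_zero_sum {N : ℕ} (f : (Fin N → ℝ) → ℝ) {v : Fin N → ℝ}
    (h : ∑ n, v n = 0) : impurity f v = 0 := by
  unfold impurity; rw [h, zero_mul]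

lemma impurity_concave {N : ℕ} {f : (Fin N → ℝ) → ℝ} (hf : ConcaveOnSimplex f) :
    ConcaveOn ℝ {v : Fin N → ℝ | ∀ n, 0 ≤ v n} (impurity f) := by
  constructor
  · intro x hx y hy a b ha hb _ n
    exact add_nonneg (mul_nonneg ha (hx n)) (mul_nonneg hb (hy n))
  intro x hx y hy a b ha hb hab
  simp only [smul_eq_mul]
  set s := ∑ n, x n with hs
  set t := ∑ n, y n with ht
  have hs0 : 0 ≤ s := Finset.sum_nonneg fun n _ => hx n
  have ht0 : 0 ≤ t := Finset.sum_nonneg fun n _ => hy n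
  have hsum : ∑ n, (a • x + b • y) n = a * s + b * t := by
    simp [hs, ht, Finset.mul_sum, Finset.sum_add_distrib]
  rcases eq_or_lt_of_le ha with ha0 | ha
  · have hb1 : b = 1 := by linarith
    have : a • x + b • y = y := by funext n; simp [← ha0, hb1]
    rw [this, ← ha0, hb1]; ring_nf; rfl
  rcases eq_or_lt_of_le hb with hb0 | hb
  · have ha1 : a = 1 := by linarith
    have : a • x + b • y = x := by funext n; simp [← hb0, ha1]
    rw [this, ← hb0, ha1]; ring_nf; rfl
  rcases eq_or_lt_of_le hs0 with hs0' | hsps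
  · -- s = 0 hence x = 0
    have hx0 : x = 0 := by
      funext n
      have := (Finset.sum_eq_zero_iff_of_nonneg (fun n _ => hx n)).mp hs0'.symm n (Finset.mem_univ n)
      simpa using this
    have : a • x + b • y = b • y := by rw [hx0]; funext n; simp
    rw [this, impurity_smul f hb, impurity_zero_sum f hs0'.symm]; simp
  rcases eq_or_lt_of_le ht0 with ht0' | htp
  · have hy0 : y = 0 := by
      funext n
      have := (Finset.sum_eq_zero_iff_of_nonneg (fun n _ => hy n)).mp ht0'.symm n (Finset.mem_univ n)
      simpa using this
    have : a • x + b • y = a • x := by rw [hy0]; funext n; simp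
    rw [this, impurity_smul f ha, impurity_zero_sum f ht0'.symm]; simp
  -- main case
  have hT : 0 < a * s + b * t := by positivity
  have hxs : (fun n => x n / s) ∈ simplex N := by
    constructor
    · intro n; exact div_nonneg (hx n) hs0
    · rw [← Finset.sum_div]; exact div_self (ne_of_gt hsps)
  have hyt : (fun n => y n / t) ∈ simplex N := by
    constructor
    · intro n; exact div_nonneg (hy n) ht0
    · rw [← Finset.sum_div]; exact div_self (ne_of_gt htp)
  set lam := a * s / (a * s + b * t) with hlam
  have hlam0 : 0 ≤ lam := by positivity
  have hlam1 : lam ≤ 1 := by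
    rw [hlam, div_le_one hT]; nlinarith
  have h1lam : 1 - lam = b * t / (a * s + b * t) := by
    rw [hlam]; field_simp; ring
  have key := hf _ hxs _ hyt lam ⟨hlam0, hlam1⟩
  have harg : (lam • (fun n => x n / s) + (1 - lam) • (fun n => y n / t))
      = fun n => (a • x + b • y) n / (a * s + b * t) := by
    funext n
    simp only [Pi.add_apply, Pi.smul_apply, smul_eq_mul, h1lam, hlam]
    field_simp
    ring
  rw [harg] at key
  unfold impurity
  simp only [hsum]
  have hmul := mul_le_mul_of_nonneg_left key (le_of_lt hT)
  calc a * (s * f fun n => x n / ∑ m, x m) + b * (t * f fun n => y n / ∑ m, y m)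
      = (a * s + b * t) * (lam * f (fun n => x n / s) + (1 - lam) * f (fun n => y n / t)) := by
        simp only [← hs, ← ht, h1lam, hlam]
        field_simp
        ring
    _ ≤ (a * s + b * t) * f (fun n => (a • x + b • y) n / (a * s + b * t)) := hmul

lemma impurity_jensen {N K : ℕ} {f : (Fin N → ℝ) → ℝ} (hf : ConcaveOnSimplex f)
    (w : Fin K → ℝ) (hw0 : ∀ k, 0 ≤ w k) (hw1 : ∑ k, w k = 1)
    (v : Fin K → Fin N → ℝ) (hv : ∀ k n, 0 ≤ v k n) :
    ∑ k, w k * impurity f (v k) ≤ impurity f (fun n => ∑ k, w k * v k n) := by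
  have h := (impurity_concave hf).le_map_sum (t := Finset.univ) (w := w) (p := v)
    (fun k _ => hw0 k) hw1 (fun k _ => fun n => hv k n)
  have e1 : (∑ k, w k • v k) = fun n => ∑ k, w k * v k n := by
    funext n; simp [Finset.sum_apply]
  simpa [smul_eq_mul, e1] using h

/-- vertex quantizer rows -/
def vtx {K : ℕ} (k : Fin K) : Fin K → ℝ := fun k' => if k' = k then 1 else 0

lemma pXZ_update {N M K : ℕ} (p : Fin N → Fin M → ℝ) (Q : Fin M → Fin K → ℝ)
    (m₀ : Fin M) (r : Fin K → ℝ) (n : Fin N) (k : Fin K) :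
    pXZ p (Function.update Q m₀ r) n k = pXZ p Q n k + p n m₀ * (r k - Q m₀ k) := by
  unfold pXZ
  have h : ∀ m, p n m * Function.update Q m₀ r m k
      = p n m * Q m k + (if m = m₀ then p n m₀ * (r k - Q m₀ k) else 0) := by
    intro m
    rcases eq_or_ne m m₀ with h | h
    · subst h; simp [Function.update_self]; ring
    · simp [Function.update_of_ne h, h]
  simp only [h, Finset.sum_add_distrib, Finset.sum_ite_eq' Finset.univ m₀, Finset.mem_univ,
    if_true]

lemma pZ_update {N M K : ℕ} (p : Fin N → Fin M → ℝ) (Q : Fin M → Fin K → ℝ)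
    (m₀ : Fin M) (r : Fin K → ℝ) (k : Fin K) :
    pZ p (Function.update Q m₀ r) k = pZ p Q k + pY p m₀ * (r k - Q m₀ k) := by
  unfold pZ pY
  simp only [pXZ_update, Finset.sum_add_distrib, ← Finset.sum_mul]

lemma pXT_update {N M K H : ℕ} (p : Fin N → Fin M → ℝ) (Q : Fin M → Fin K → ℝ)
    (A : Fin K → Fin H → ℝ) (m₀ : Fin M) (r : Fin K → ℝ) (n : Fin N) (h : Fin H) :
    pXT p (Function.update Q m₀ r) A n h
      = pXT p Q A n h + p n m₀ * ∑ k, (r k - Q m₀ k) * A k h := by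
  unfold pXT
  simp only [pXZ_update, add_mul, Finset.sum_add_distrib, Finset.mul_sum]
  congr 1
  exact Finset.sum_congr rfl fun k _ => by ring

lemma pXZ_nonneg {N M K : ℕ} {p : Fin N → Fin M → ℝ} {Q : Fin M → Fin K → ℝ}
    (hp : ∀ n m, 0 ≤ p n m) (hQ : ∀ m k, 0 ≤ Q m k) (n : Fin N) (k : Fin K) :
    0 ≤ pXZ p Q n k :=
  Finset.sum_nonneg fun m _ => mul_nonneg (hp n m) (hQ m k)

lemma pXT_nonneg {N M K H : ℕ} {p : Fin N → Fin M → ℝ} {Q : Fin M → Fin K → ℝ}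
    {A : Fin K → Fin H → ℝ} (hp : ∀ n m, 0 ≤ p n m) (hQ : ∀ m k, 0 ≤ Q m k)
    (hA : ∀ k h, 0 ≤ A k h) (n : Fin N) (h : Fin H) : 0 ≤ pXT p Q A n h :=
  Finset.sum_nonneg fun k _ => mul_nonneg (pXZ_nonneg hp hQ n k) (hA k h)

lemma update_vtx_rowStochastic {M K : ℕ} {Q : Fin M → Fin K → ℝ} (hQ : RowStochastic Q)
    (m₀ : Fin M) (k₀ : Fin K) : RowStochastic (Function.update Q m₀ (vtx k₀)) := by
  constructor
  · intro m k
    rcases eq_or_ne m m₀ with h | h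
    · subst h; simp only [Function.update_self, vtx]; positivity
    · rw [Function.update_of_ne h]; exact hQ.1 m k
  · intro m
    rcases eq_or_ne m m₀ with h | h
    · subst h; simp [Function.update_self, vtx, Finset.sum_ite_eq' Finset.univ k₀]
    · rw [Function.update_of_ne h]; exact hQ.2 m

lemma comb_pZ {N M K : ℕ} (p : Fin N → Fin M → ℝ) (Q : Fin M → Fin K → ℝ) (m₀ : Fin M)
    (q : Fin K → ℝ) (hq1 : ∑ k, q k = 1) (k : Fin K) :
    ∑ k', q k' * pZ p (Function.update Q m₀ (vtx k')) k
      = pZ p (Function.update Q m₀ q) k := by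
  simp only [pZ_update]
  have h1 : ∀ k', q k' * (pZ p Q k + pY p m₀ * (vtx k' k - Q m₀ k))
      = q k' * (pZ p Q k - pY p m₀ * Q m₀ k) + pY p m₀ * (q k' * vtx k' k) := by
    intro k'; ring
  have h2 : ∑ k', q k' * vtx k' k = q k := by
    simp only [vtx, mul_ite, mul_one, mul_zero]
    rw [Finset.sum_ite_eq Finset.univ k q]
    simp
  simp only [h1, Finset.sum_add_distrib, ← Finset.sum_mul, ← Finset.mul_sum, hq1, h2]
  ring

lemma comb_pXT {N M K H : ℕ} (p : Fin N → Fin M → ℝ) (Q : Fin M → Fin K → ℝ)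
    (A : Fin K → Fin H → ℝ) (m₀ : Fin M) (q : Fin K → ℝ) (hq1 : ∑ k, q k = 1)
    (n : Fin N) (h : Fin H) :
    ∑ k', q k' * pXT p (Function.update Q m₀ (vtx k')) A n h
      = pXT p (Function.update Q m₀ q) A n h := by
  simp only [pXT_update]
  have hv : ∀ k', ∑ k, (vtx k' k - Q m₀ k) * A k h
      = A k' h - ∑ k, Q m₀ k * A k h := by
    intro k'
    simp only [sub_mul, Finset.sum_sub_distrib, vtx, ite_mul, one_mul, zero_mul]
    rw [Finset.sum_ite_eq' Finset.univ k' (fun k => A k h)]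
    simp
  have hq : ∀ k, (q k - Q m₀ k) * A k h = q k * A k h - Q m₀ k * A k h := fun k => by ring
  simp only [hv, hq, Finset.sum_sub_distrib]
  have h1 : ∀ k', q k' * (pXT p Q A n h + p n m₀ * (A k' h - ∑ k, Q m₀ k * A k h))
      = q k' * (pXT p Q A n h - p n m₀ * ∑ k, Q m₀ k * A k h) + p n m₀ * (q k' * A k' h) := by
    intro k'; ring
  simp only [h1, Finset.sum_add_distrib, ← Finset.sum_mul, ← Finset.mul_sum, hq1]
  ring

lemma step_lemma {N M K H : ℕ} (β : ℝ) (hβ : 0 ≤ β)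
    (f : (Fin N → ℝ) → ℝ) (g : Fin K → ℝ → ℝ)
    (p : Fin N → Fin M → ℝ) (A : Fin K → Fin H → ℝ)
    (hp : ∀ n m, 0 ≤ p n m) (hA : ∀ k h, 0 ≤ A k h)
    (hf : ConcaveOnSimplex f) (hg : ∀ k, ConcaveOn ℝ Set.univ (g k))
    {Q : Fin M → Fin K → ℝ} (hQ : RowStochastic Q) (m₀ : Fin M) :
    ∃ k₀ : Fin K, J β f g p A (Function.update Q m₀ (vtx k₀)) ≤ J β f g p A Q := by
  set q := Q m₀ with hqdef
  have hq0 : ∀ k, 0 ≤ q k := hQ.1 m₀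
  have hq1 : ∑ k, q k = 1 := hQ.2 m₀
  have hQ' : ∀ k₀ : Fin K, ∀ m k, 0 ≤ Function.update Q m₀ (vtx k₀) m k := fun k₀ =>
    (update_vtx_rowStochastic hQ m₀ k₀).1
  have keyJ : ∑ k', q k' * J β f g p A (Function.update Q m₀ (vtx k')) ≤ J β f g p A Q := by
    have hself : Function.update Q m₀ q = Q := Function.update_eq_self m₀ Q
    conv_rhs => rw [← hself]
    unfold J
    have expand : ∑ k', q k' * (β * ∑ h, impurity f (fun n => pXT p (Function.update Q m₀ (vtx k')) A n h)
          + ∑ k, g k (pZ p (Function.update Q m₀ (vtx k')) k))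
        = β * ∑ h, ∑ k', q k' * impurity f (fun n => pXT p (Function.update Q m₀ (vtx k')) A n h)
          + ∑ k, ∑ k', q k' * g k (pZ p (Function.update Q m₀ (vtx k')) k) := by
      have e1 : ∀ k' : Fin K, q k' * ((β * ∑ h, impurity f fun n => pXT p (Function.update Q m₀ (vtx k')) A n h)
            + ∑ k, g k (pZ p (Function.update Q m₀ (vtx k')) k))
          = β * ∑ h, q k' * impurity f (fun n => pXT p (Function.update Q m₀ (vtx k')) A n h)
            + ∑ k, q k' * g k (pZ p (Function.update Q m₀ (vtx k')) k) := by
        intro k'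
        rw [mul_add]
        congr 1
        · rw [mul_left_comm]
          congr 1
          rw [Finset.mul_sum]
        · rw [Finset.mul_sum]
      calc ∑ k', q k' * ((β * ∑ h, impurity f fun n => pXT p (Function.update Q m₀ (vtx k')) A n h)
              + ∑ k, g k (pZ p (Function.update Q m₀ (vtx k')) k))
          = ∑ k', (β * ∑ h, q k' * impurity f (fun n => pXT p (Function.update Q m₀ (vtx k')) A n h)
              + ∑ k, q k' * g k (pZ p (Function.update Q m₀ (vtx k')) k)) :=
            Finset.sum_congr rfl fun k' _ => e1 k'
        _ = β * (∑ k', ∑ h, q k' * impurity f (fun n => pXT p (Function.update Q m₀ (vtx k')) A n h))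
              + ∑ k', ∑ k, q k' * g k (pZ p (Function.update Q m₀ (vtx k')) k) := by
            rw [Finset.sum_add_distrib, ← Finset.mul_sum]
        _ = β * ∑ h, ∑ k', q k' * impurity f (fun n => pXT p (Function.update Q m₀ (vtx k')) A n h)
              + ∑ k, ∑ k', q k' * g k (pZ p (Function.update Q m₀ (vtx k')) k) := by
            congr 1
            · congr 1
              exact Finset.sum_comm
            · exact Finset.sum_comm
    rw [expand]
    apply add_le_add
    · apply mul_le_mul_of_nonneg_left _ hβ
      apply Finset.sum_le_sum
      intro h _
      have hj := impurity_jensen hf q hq0 hq1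
        (fun k' => fun n => pXT p (Function.update Q m₀ (vtx k')) A n h)
        (fun k' n => pXT_nonneg hp (hQ' k') hA n h)
      have harg : (fun n => ∑ k', q k' * pXT p (Function.update Q m₀ (vtx k')) A n h)
          = fun n => pXT p (Function.update Q m₀ q) A n h := by
        funext n; exact comb_pXT p Q A m₀ q hq1 n h
      rwa [harg] at hj
    · apply Finset.sum_le_sum
      intro k _
      have hjg := (hg k).le_map_sum (t := Finset.univ) (w := q)
        (p := fun k' => pZ p (Function.update Q m₀ (vtx k')) k)
        (fun k' _ => hq0 k') hq1 (fun k' _ => Set.mem_univ _)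
      rw [show (∑ k', q k' • pZ p (Function.update Q m₀ (vtx k')) k)
          = pZ p (Function.update Q m₀ q) k from by
        simpa [smul_eq_mul] using comb_pZ p Q m₀ q hq1 k] at hjg
      simpa [smul_eq_mul] using hjg
  -- extract a good vertex
  by_contra hcon
  push_neg at hcon
  have hex : ∃ k', 0 < q k' := by
    by_contra hn
    push_neg at hn
    have : ∑ k, q k ≤ 0 := Finset.sum_nonpos fun k _ => hn k
    linarith
  obtain ⟨k₁, hk₁⟩ := hex
  have hlt : ∑ k', q k' * J β f g p A Q < ∑ k', q k' * J β f g p A (Function.update Q m₀ (vtx k')) := by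
    apply Finset.sum_lt_sum
    · intro k' _
      exact mul_le_mul_of_nonneg_left (le_of_lt (hcon k')) (hq0 k')
    · exact ⟨k₁, Finset.mem_univ k₁, by
        exact mul_lt_mul_of_pos_left (hcon k₁) hk₁⟩
  rw [← Finset.sum_mul, hq1, one_mul] at hlt
  linarith

lemma multi_step {N M K H : ℕ} (β : ℝ) (hβ : 0 ≤ β)
    (f : (Fin N → ℝ) → ℝ) (g : Fin K → ℝ → ℝ)
    (p : Fin N → Fin M → ℝ) (A : Fin K → Fin H → ℝ)
    (hp : ∀ n m, 0 ≤ p n m) (hA : ∀ k h, 0 ≤ A k h)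
    (hf : ConcaveOnSimplex f) (hg : ∀ k, ConcaveOn ℝ Set.univ (g k)) :
    ∀ s : Finset (Fin M), ∀ Q : Fin M → Fin K → ℝ, RowStochastic Q →
      ∃ Q', RowStochastic Q' ∧ (∀ m ∈ s, ∃ k, Q' m k = 1 ∧ ∀ k', k' ≠ k → Q' m k' = 0) ∧
        J β f g p A Q' ≤ J β f g p A Q := by
  intro s
  induction s using Finset.induction_on with
  | empty => exact fun Q hQ => ⟨Q, hQ, by simp, le_refl _⟩
  | @insert a s ha ih =>
    intro Q hQ
    obtain ⟨Q', hQ', hdet, hle⟩ := ih Q hQ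
    obtain ⟨k₀, hk₀⟩ := step_lemma β hβ f g p A hp hA hf hg hQ' a
    refine ⟨Function.update Q' a (vtx k₀), update_vtx_rowStochastic hQ' a k₀, ?_,
      le_trans hk₀ hle⟩
    intro m hm
    rcases Finset.mem_insert.mp hm with h | h
    · subst h
      exact ⟨k₀, by simp [Function.update_self, vtx],
        fun k' hk' => by simp [Function.update_self, vtx, hk']⟩
    · have hma : m ≠ a := fun he => ha (he ▸ h)
      rw [Function.update_of_ne hma]
      exact hdet m h


/-- Lemma 1: optimality of hard partitions. -/
theorem stmt_9 {N M K H : ℕ}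
    (β : ℝ) (hβ : 0 < β)
    (p : Fin N → Fin M → ℝ) (hp : IsJointDist p)
    (A : Fin K → Fin H → ℝ) (hA : RowStochastic A) (hApos : ∀ k h, 0 < A k h)
    (f : (Fin N → ℝ) → ℝ) (hf : ConcaveOnSimplex f)
    (g : Fin K → ℝ → ℝ) (hg : ∀ k, ConcaveOn ℝ Set.univ (g k)) :
    (∀ Q : Fin M → Fin K → ℝ, RowStochastic Q →
      ∃ Q' : Fin M → Fin K → ℝ, Deterministic Q' ∧ J β f g p A Q' ≤ J β f g p A Q) ∧
    ((∃ Q₀ : Fin M → Fin K → ℝ, RowStochastic Q₀ ∧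
        ∀ Q : Fin M → Fin K → ℝ, RowStochastic Q → J β f g p A Q₀ ≤ J β f g p A Q) →
      ∃ Q' : Fin M → Fin K → ℝ, Deterministic Q' ∧
        ∀ Q : Fin M → Fin K → ℝ, RowStochastic Q → J β f g p A Q' ≤ J β f g p A Q) := by
  have main : ∀ Q : Fin M → Fin K → ℝ, RowStochastic Q →
      ∃ Q' : Fin M → Fin K → ℝ, Deterministic Q' ∧ J β f g p A Q' ≤ J β f g p A Q := by
    intro Q hQ
    obtain ⟨Q', hQ', hdet, hle⟩ := multi_step β (le_of_lt hβ) f g p A hp.1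
      (fun k h => le_of_lt (hApos k h)) hf hg Finset.univ Q hQ
    exact ⟨Q', fun m => hdet m (Finset.mem_univ m), hle⟩
  refine ⟨main, ?_⟩
  rintro ⟨Q₀, hQ₀, hmin⟩
  obtain ⟨Q', hdet, hle⟩ := main Q₀ hQ₀
  exact ⟨Q', hdet, fun Q hQ => le_trans hle (hmin Q hQ)⟩
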